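/- arXiv:2010.10549 — 3 statements merged into one kernel-verified Lean document; each statement's English description precedes it below -/
import Mathlib

section
/- Fix C ∈ (0,1). The function a ↦ Φ'(Φ⁻¹(a)) − Φ'(Φ⁻¹(a + C)) is strictly increasing on (0, 1 − C); consequently, for every value v in its range (−Φ'(Φ⁻¹(C)), Φ'(Φ⁻¹(C))) there is a unique a ∈ (0, 1 − C) with Φ'(Φ⁻¹(a)) − Φ'(Φ⁻¹(a + C)) = v. -/
open MeasureTheory ProbabilityTheory Real

noncomputable section

/-- The standard normal cumulative distribution function Φ. -/
def Phi (x : ℝ) : ℝ := ((gaussianReal 0 1) (Set.Iic x)).toReal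

/-- The inverse Φ⁻¹ of the standard normal CDF (meaningful on (0,1)). -/
def PhiInv : ℝ → ℝ := Function.invFun Phi

/-- The standard normal probability density function Φ'. -/
def stdPdf (x : ℝ) : ℝ := Real.exp (-x ^ 2 / 2) / Real.sqrt (2 * Real.pi)

/-- `Φ(Φ⁻¹(y) - c)` with the conventions `Φ⁻¹(0) = -∞`, `Φ⁻¹(1) = +∞`,
`Φ(-∞ - c) = 0`, `Φ(+∞ - c) = 1`. -/
def PhiShift (c y : ℝ) : ℝ := if y ≤ 0 then 0 else if 1 ≤ y then 1 else Phi (PhiInv y - c)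

/-- `Φ'(Φ⁻¹(y))` with the conventions `Φ⁻¹(0) = -∞`, `Φ⁻¹(1) = +∞`, `Φ'(±∞) = 0`. -/
def pdfAtQuantile (y : ℝ) : ℝ := if y ≤ 0 then 0 else if 1 ≤ y then 0 else stdPdf (PhiInv y)

/-- The isotropic Gaussian measure `N(0, σ²I_d)` on `ℝ^d`. -/
def gaussPi (σ : ℝ) (d : ℕ) : Measure (EuclideanSpace ℝ (Fin d)) :=
  Measure.map (MeasurableEquiv.toLp 2 (Fin d → ℝ))
    (Measure.pi fun _ : Fin d => gaussianReal 0 (Real.toNNReal (σ ^ 2)))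

/-- The Gaussian-smoothed function `p_a(x) = E_{ε ~ N(0,σ²I_d)}[f(x+ε)]`. -/
def smoothed (σ : ℝ) (d : ℕ) (f : EuclideanSpace ℝ (Fin d) → ℝ)
    (x : EuclideanSpace ℝ (Fin d)) : ℝ := ∫ ε, f (x + ε) ∂(gaussPi σ d)

/-- A centered real random variable `Z` is `(a,b)`-subexponential if `E[Z] = 0` and
`E[exp (l Z)] ≤ exp (a² l² / 2)` for all `|l| ≤ 1/b`. -/
def IsSubexponential {Ω : Type*} [MeasurableSpace Ω] (μ : Measure Ω) (Z : Ω → ℝ)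
    (a b : ℝ) : Prop :=
  (∫ ω, Z ω ∂μ) = 0 ∧
    ∀ l : ℝ, |l| ≤ 1 / b → (∫ ω, Real.exp (l * Z ω) ∂μ) ≤ Real.exp (a ^ 2 * l ^ 2 / 2)

open Filter Set Topology

lemma stdPdf_pos (x : ℝ) : 0 < stdPdf x :=
  div_pos (Real.exp_pos _) (Real.sqrt_pos.2 (by positivity))

lemma stdPdf_eq (x : ℝ) : stdPdf x = gaussianPDFReal 0 1 x := by
  simp [stdPdf, gaussianPDFReal, div_eq_inv_mul, mul_comm]

lemma stdPdf_neg (x : ℝ) : stdPdf (-x) = stdPdf x := by simp [stdPdf]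

lemma continuous_stdPdf : Continuous stdPdf := by
  unfold stdPdf; fun_prop

lemma integrable_stdPdf : Integrable stdPdf := by
  have := integrable_gaussianPDFReal 0 1
  refine this.congr ?_
  filter_upwards with x using (stdPdf_eq x).symm

lemma Phi_eq (x : ℝ) : Phi x = ∫ t in Set.Iic x, stdPdf t := by
  rw [Phi, gaussianReal_apply_eq_integral 0 one_ne_zero,
    ENNReal.toReal_ofReal (integral_nonneg fun t => gaussianPDFReal_nonneg 0 1 t)]
  exact (setIntegral_congr_fun measurableSet_Iic fun t _ => stdPdf_eq t).symm

lemma hasDerivAt_Phi (x : ℝ) : HasDerivAt Phi (stdPdf x) x := by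
  have h : ∀ y : ℝ, Phi y = Phi 0 + ∫ t in (0:ℝ)..y, stdPdf t := by
    intro y
    rw [Phi_eq, Phi_eq,
      ← intervalIntegral.integral_Iic_sub_Iic (integrable_stdPdf.integrableOn)
        (integrable_stdPdf.integrableOn)]
    ring
  have hd : HasDerivAt (fun y => Phi 0 + ∫ t in (0:ℝ)..y, stdPdf t) (stdPdf x) x := by
    refine HasDerivAt.const_add _ ?_
    exact intervalIntegral.integral_hasDerivAt_right
      (integrable_stdPdf.intervalIntegrable)
      (continuous_stdPdf.stronglyMeasurable.stronglyMeasurableAtFilter)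
      continuous_stdPdf.continuousAt
  exact hd.congr_of_eventuallyEq (Filter.Eventually.of_forall h)

lemma strictMono_Phi : StrictMono Phi := by
  apply strictMono_of_deriv_pos
  intro x
  rw [(hasDerivAt_Phi x).deriv]
  exact stdPdf_pos x

lemma continuous_Phi : Continuous Phi :=
  continuous_iff_continuousAt.2 fun x => (hasDerivAt_Phi x).continuousAt

lemma integral_stdPdf : ∫ t, stdPdf t = 1 := by
  rw [integral_congr_ae (Filter.Eventually.of_forall stdPdf_eq)]
  exact integral_gaussianPDFReal_eq_one 0 one_ne_zero

lemma Phi_neg (x : ℝ) : Phi (-x) = 1 - Phi x := by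
  have h1 : Phi (-x) = ∫ t in Set.Ici x, stdPdf t := by
    rw [Phi_eq]
    rw [show ∫ t in Set.Iic (-x), stdPdf t = ∫ t in Set.Iic (-x), stdPdf (-t) from
      setIntegral_congr_fun measurableSet_Iic fun t _ => (stdPdf_neg t).symm]
    rw [integral_comp_neg_Iic, neg_neg, ← integral_Ici_eq_integral_Ioi]
  have h2 : Phi x + Phi (-x) = 1 := by
    rw [Phi_eq, h1, integral_Ici_eq_integral_Ioi,
      ← setIntegral_union (Set.Iic_disjoint_Ioi le_rfl) measurableSet_Ioi
        integrable_stdPdf.integrableOn integrable_stdPdf.integrableOn,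
      Set.Iic_union_Ioi, setIntegral_univ, integral_stdPdf]
  linarith

lemma Phi_tendsto_atTop : Tendsto Phi atTop (𝓝 1) := by
  have h := tendsto_measure_Iic_atTop (gaussianReal 0 1)
  rw [measure_univ] at h
  have h2 : Tendsto (fun x => ((gaussianReal 0 1) (Set.Iic x)).toReal) atTop
      (𝓝 (1 : ENNReal).toReal) := (ENNReal.tendsto_toReal ENNReal.one_ne_top).comp h
  rw [ENNReal.toReal_one] at h2; exact h2

lemma Phi_tendsto_atBot : Tendsto Phi atBot (𝓝 0) := by
  have h : Tendsto (fun x => 1 - Phi (-x)) atBot (𝓝 (1 - 1)) :=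
    (tendsto_const_nhds.sub (Phi_tendsto_atTop.comp tendsto_neg_atBot_atTop))
  simp only [sub_self] at h
  refine h.congr fun x => ?_
  rw [Phi_neg]; ring

lemma Phi_lt_one (x : ℝ) : Phi x < 1 := by
  have h1 : Phi x < Phi (x + 1) := strictMono_Phi (by linarith)
  have h2 : Phi (x + 1) ≤ 1 := by
    rw [Phi]
    exact ENNReal.toReal_le_of_le_ofReal zero_le_one (by simpa using prob_le_one)
  linarith

lemma Phi_pos (x : ℝ) : 0 < Phi x := by
  have h1 : Phi (x - 1) < Phi x := strictMono_Phi (by linarith)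
  have h2 : 0 ≤ Phi (x - 1) := ENNReal.toReal_nonneg
  linarith

lemma Phi_mem_Ioo (x : ℝ) : Phi x ∈ Set.Ioo (0:ℝ) 1 := ⟨Phi_pos x, Phi_lt_one x⟩

lemma Phi_surjOn {y : ℝ} (hy : y ∈ Set.Ioo (0:ℝ) 1) : ∃ x, Phi x = y := by
  obtain ⟨a, ha⟩ := (Phi_tendsto_atBot.eventually_lt_const hy.1).exists
  obtain ⟨b, hb⟩ := (Phi_tendsto_atTop.eventually_const_lt hy.2).exists
  have hab : a ≤ b := le_of_lt (strictMono_Phi.lt_iff_lt.1 (by linarith))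
  obtain ⟨x, _, hx⟩ := intermediate_value_Icc hab (continuous_Phi.continuousOn)
    ⟨le_of_lt ha, le_of_lt hb⟩
  exact ⟨x, hx⟩

lemma Phi_PhiInv {y : ℝ} (hy : y ∈ Set.Ioo (0:ℝ) 1) : Phi (PhiInv y) = y :=
  Function.invFun_eq (Phi_surjOn hy)

lemma PhiInv_Phi (x : ℝ) : PhiInv (Phi x) = x :=
  Function.leftInverse_invFun strictMono_Phi.injective x

lemma strictMonoOn_PhiInv : StrictMonoOn PhiInv (Set.Ioo (0:ℝ) 1) := by
  intro y1 h1 y2 h2 h12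
  rw [← strictMono_Phi.lt_iff_lt, Phi_PhiInv h1, Phi_PhiInv h2]
  exact h12

lemma continuousAt_PhiInv {y : ℝ} (hy : y ∈ Set.Ioo (0:ℝ) 1) : ContinuousAt PhiInv y := by
  refine strictMonoOn_PhiInv.continuousAt_of_image_mem_nhds
    (Ioo_mem_nhds hy.1 hy.2) ?_
  have himg : PhiInv '' Set.Ioo (0:ℝ) 1 = Set.univ :=
    Set.eq_univ_of_forall fun x => ⟨Phi x, Phi_mem_Ioo x, PhiInv_Phi x⟩
  rw [himg]; exact Filter.univ_mem

lemma hasDerivAt_PhiInv {y : ℝ} (hy : y ∈ Set.Ioo (0:ℝ) 1) :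
    HasDerivAt PhiInv (stdPdf (PhiInv y))⁻¹ y := by
  refine HasDerivAt.of_local_left_inverse (continuousAt_PhiInv hy)
    (hasDerivAt_Phi (PhiInv y)) (ne_of_gt (stdPdf_pos _)) ?_
  filter_upwards [Ioo_mem_nhds hy.1 hy.2] with z hz using Phi_PhiInv hz

lemma hasDerivAt_stdPdf (x : ℝ) : HasDerivAt stdPdf (-x * stdPdf x) x := by
  have h1 : HasDerivAt (fun x : ℝ => -x ^ 2 / 2) (-x) x := by
    have := ((hasDerivAt_pow 2 x).neg.div_const 2)
    refine this.congr_deriv ?_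
    norm_num
    ring
  have h2 := (h1.exp).div_const (Real.sqrt (2 * Real.pi))
  refine HasDerivAt.congr_deriv (f := stdPdf) h2 ?_
  unfold stdPdf; ring

lemma hasDerivAt_pdfQuantile {y : ℝ} (hy : y ∈ Set.Ioo (0:ℝ) 1) :
    HasDerivAt (fun a => stdPdf (PhiInv a)) (-(PhiInv y)) y := by
  have h := (hasDerivAt_stdPdf (PhiInv y)).comp y (hasDerivAt_PhiInv hy)
  refine h.congr_deriv ?_
  field_simp [ne_of_gt (stdPdf_pos (PhiInv y))]

lemma tendsto_PhiInv_zero : Tendsto PhiInv (𝓝[>] (0:ℝ)) atBot := by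
  rw [tendsto_atBot]
  intro M
  filter_upwards [Ioo_mem_nhdsGT_of_mem ⟨le_refl 0, Phi_pos M⟩] with y hy
  have hy1 : y ∈ Set.Ioo (0:ℝ) 1 := ⟨hy.1, lt_trans hy.2 (Phi_lt_one M)⟩
  have : Phi (PhiInv y) < Phi M := by rw [Phi_PhiInv hy1]; exact hy.2
  exact le_of_lt (strictMono_Phi.lt_iff_lt.1 this)

lemma tendsto_PhiInv_one : Tendsto PhiInv (𝓝[<] (1:ℝ)) atTop := by
  rw [tendsto_atTop]
  intro M
  filter_upwards [Ioo_mem_nhdsLT_of_mem ⟨Phi_lt_one M, le_refl 1⟩] with y hy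
  have hy1 : y ∈ Set.Ioo (0:ℝ) 1 := ⟨lt_trans (Phi_pos M) hy.1, hy.2⟩
  have : Phi M < Phi (PhiInv y) := by rw [Phi_PhiInv hy1]; exact hy.1
  exact le_of_lt (strictMono_Phi.lt_iff_lt.1 this)

lemma tendsto_sq_atTop : Tendsto (fun x : ℝ => -x ^ 2 / 2) atTop atBot := by
  apply Tendsto.atBot_div_const two_pos
  exact tendsto_neg_atBot_iff.2 (tendsto_pow_atTop two_ne_zero)

lemma tendsto_stdPdf_atTop : Tendsto stdPdf atTop (𝓝 0) := by
  have h : Tendsto (fun x : ℝ => Real.exp (-x ^ 2 / 2)) atTop (𝓝 0) :=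
    Real.tendsto_exp_atBot.comp tendsto_sq_atTop
  unfold stdPdf
  simpa [zero_div] using h.div_const (Real.sqrt (2 * Real.pi))

lemma tendsto_stdPdf_atBot : Tendsto stdPdf atBot (𝓝 0) := by
  have h := tendsto_stdPdf_atTop.comp tendsto_neg_atBot_atTop
  refine h.congr fun x => ?_
  exact stdPdf_neg x

lemma PhiInv_one_sub {y : ℝ} (hy : y ∈ Set.Ioo (0:ℝ) 1) : PhiInv (1 - y) = -(PhiInv y) := by
  have h : Phi (-(PhiInv y)) = 1 - y := by rw [Phi_neg, Phi_PhiInv hy]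
  rw [← h, PhiInv_Phi]


/-- for fixed `C ∈ (0,1)`, `a ↦ Φ'(Φ⁻¹(a)) - Φ'(Φ⁻¹(a + C))` is strictly
increasing on `(0, 1-C)`, and every `v` in `(-Φ'(Φ⁻¹(C)), Φ'(Φ⁻¹(C)))` is attained at a
unique `a ∈ (0, 1-C)`. -/
theorem strictMono_and_unique_solution (C : ℝ) (hC : C ∈ Set.Ioo (0 : ℝ) 1) :
    StrictMonoOn (fun a => stdPdf (PhiInv a) - stdPdf (PhiInv (a + C)))
      (Set.Ioo (0 : ℝ) (1 - C)) ∧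
    ∀ v ∈ Set.Ioo (-(stdPdf (PhiInv C))) (stdPdf (PhiInv C)),
      ∃! a, a ∈ Set.Ioo (0 : ℝ) (1 - C) ∧
        stdPdf (PhiInv a) - stdPdf (PhiInv (a + C)) = v := by
  set f : ℝ → ℝ := fun a => stdPdf (PhiInv a) - stdPdf (PhiInv (a + C)) with hf
  have hmem1 : ∀ a ∈ Set.Ioo (0:ℝ) (1 - C), a ∈ Set.Ioo (0:ℝ) 1 :=
    fun a ha => ⟨ha.1, by linarith [ha.2, hC.1]⟩
  have hmem2 : ∀ a ∈ Set.Ioo (0:ℝ) (1 - C), a + C ∈ Set.Ioo (0:ℝ) 1 :=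
    fun a ha => ⟨by linarith [ha.1, hC.1], by linarith [ha.2]⟩
  have hderiv : ∀ a ∈ Set.Ioo (0:ℝ) (1 - C),
      HasDerivAt f (PhiInv (a + C) - PhiInv a) a := by
    intro a ha
    have g1 := hasDerivAt_pdfQuantile (hmem1 a ha)
    have g2 : HasDerivAt (fun a => stdPdf (PhiInv (a + C))) (-(PhiInv (a + C))) a := by
      have := (hasDerivAt_pdfQuantile (hmem2 a ha)).comp a
        ((hasDerivAt_id a).add_const C)
      exact this.congr_deriv (mul_one _)
    have := g1.sub g2
    refine this.congr_deriv ?_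
    ring
  have hmono : StrictMonoOn f (Set.Ioo (0:ℝ) (1 - C)) := by
    refine strictMonoOn_of_deriv_pos (convex_Ioo _ _) ?_ ?_
    · exact fun a ha => (hderiv a ha).continuousAt.continuousWithinAt
    · intro a ha
      rw [interior_Ioo] at ha
      rw [(hderiv a ha).deriv]
      have := strictMonoOn_PhiInv (hmem1 a ha) (hmem2 a ha) (by linarith [hC.1])
      linarith
  refine ⟨hmono, ?_⟩
  intro v hv
  set M : ℝ := stdPdf (PhiInv C) with hM
  have hCIoo : C ∈ Set.Ioo (0:ℝ) 1 := hC
  have h1C : (1 - C) ∈ Set.Ioo (0:ℝ) 1 := ⟨by linarith [hC.2], by linarith [hC.1]⟩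
  have hsym : stdPdf (PhiInv (1 - C)) = M := by
    rw [PhiInv_one_sub hCIoo, stdPdf_neg]
  -- limit at 0⁺
  have hL0 : Tendsto f (𝓝[>] (0:ℝ)) (𝓝 (0 - M)) := by
    have t1 : Tendsto (fun a => stdPdf (PhiInv a)) (𝓝[>] (0:ℝ)) (𝓝 0) :=
      tendsto_stdPdf_atBot.comp tendsto_PhiInv_zero
    have tadd : Tendsto (fun a : ℝ => a + C) (𝓝[>] (0:ℝ)) (𝓝 C) := by
      have : Tendsto (fun a : ℝ => a + C) (𝓝 (0:ℝ)) (𝓝 (0 + C)) :=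
        (continuous_id.add continuous_const).tendsto 0
      rw [zero_add] at this
      exact this.mono_left nhdsWithin_le_nhds
    have t2 : Tendsto (fun a => stdPdf (PhiInv (a + C))) (𝓝[>] (0:ℝ)) (𝓝 M) :=
      ((hasDerivAt_pdfQuantile hCIoo).continuousAt.tendsto).comp tadd
    exact t1.sub t2
  -- limit at (1-C)⁻
  have hL1 : Tendsto f (𝓝[<] (1 - C)) (𝓝 (M - 0)) := by
    have t1 : Tendsto (fun a => stdPdf (PhiInv a)) (𝓝[<] (1 - C)) (𝓝 M) := by
      have := (hasDerivAt_pdfQuantile h1C).continuousAt.tendsto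
      rw [hsym] at this
      exact this.mono_left nhdsWithin_le_nhds
    have tadd : Tendsto (fun a : ℝ => a + C) (𝓝[<] (1 - C)) (𝓝[<] (1:ℝ)) := by
      refine tendsto_nhdsWithin_of_tendsto_nhds_of_eventually_within _ ?_ ?_
      · have : Tendsto (fun a : ℝ => a + C) (𝓝 (1 - C)) (𝓝 ((1 - C) + C)) :=
          (continuous_id.add continuous_const).tendsto _
        rw [sub_add_cancel] at this
        exact this.mono_left nhdsWithin_le_nhds
      · filter_upwards [self_mem_nhdsWithin] with a (ha : a < 1 - C)
        exact show a + C < 1 by linarith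
    have t2 : Tendsto (fun a => stdPdf (PhiInv (a + C))) (𝓝[<] (1 - C)) (𝓝 0) :=
      (tendsto_stdPdf_atTop.comp tendsto_PhiInv_one).comp tadd
    exact t1.sub t2
  rw [zero_sub] at hL0
  rw [sub_zero] at hL1
  have hsub : (0:ℝ) < 1 - C := by linarith [hC.2]
  have hne0 : (𝓝[>] (0:ℝ)).NeBot := nhdsGT_neBot 0
  have hne1 : (𝓝[<] (1 - C)).NeBot := nhdsLT_neBot (1 - C)
  obtain ⟨a₁, ha₁v, ha₁⟩ :=
    ((hL0.eventually_lt_const hv.1).and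
      (Ioo_mem_nhdsGT_of_mem ⟨le_refl 0, hsub⟩)).exists
  obtain ⟨a₂, ha₂v, ha₂⟩ :=
    ((hL1.eventually_const_lt hv.2).and
      (Ioo_mem_nhdsLT_of_mem ⟨hsub, le_refl (1 - C)⟩)).exists
  have h12 : a₁ < a₂ := by
    by_contra h
    push_neg at h
    have := hmono.le_iff_le ha₂ ha₁
    have : f a₂ ≤ f a₁ := (hmono.le_iff_le ha₂ ha₁).2 h
    linarith
  have hIcc : Set.Icc a₁ a₂ ⊆ Set.Ioo (0:ℝ) (1 - C) := Set.Icc_subset_Ioo ha₁.1 ha₂.2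
  have hcont : ContinuousOn f (Set.Icc a₁ a₂) :=
    fun a ha => ((hderiv a (hIcc ha)).continuousAt).continuousWithinAt
  have hIVT := intermediate_value_Ioo (le_of_lt h12) hcont
  obtain ⟨a, haIoo, hfa⟩ := hIVT ⟨ha₁v, ha₂v⟩
  have haMem : a ∈ Set.Ioo (0:ℝ) (1 - C) :=
    ⟨lt_trans ha₁.1 haIoo.1, lt_trans haIoo.2 ha₂.2⟩
  refine ⟨a, ⟨haMem, hfa⟩, ?_⟩
  rintro b ⟨hbMem, hfb⟩
  exact hmono.injOn hbMem haMem (hfb.trans hfa.symm)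
end
end

section
/- Let X be an integrable real random variable and let v be a Bernoulli random variable taking values in {0,1} (defined on the same probability space, possibly dependent on X) with 0 < P(v = 0). Define A := Xv + (1 − v)·E[X | v = 0]. Then for every λ ∈ ℝ for which E[e^{λX}] is finite, E[e^{λA}] ≤ E[e^{λX}]. -/
open MeasureTheory ProbabilityTheory Real

noncomputable section

/-- Jensen step: for integrable `X`, a `{0,1}`-valued `v` with
`P(v = 0) > 0`, and `A := Xv + (1 - v) E[X | v = 0]`, one has `E[e^{λA}] ≤ E[e^{λX}]`
for every `λ` with `E[e^{λX}]` finite. -/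
theorem jensen_conditional_replacement {Ω : Type*} [MeasurableSpace Ω]
    (μ : Measure Ω) [IsProbabilityMeasure μ]
    (X v : Ω → ℝ) (hX : Integrable X μ) (hv : Measurable v)
    (hv01 : ∀ ω, v ω = 0 ∨ v ω = 1)
    (h0 : 0 < μ {ω | v ω = 0})
    (A : Ω → ℝ)
    (hA : A = fun ω => X ω * v ω +
      (1 - v ω) * ((∫ ω' in {ω' | v ω' = 0}, X ω' ∂μ) / (μ {ω' | v ω' = 0}).toReal))
    (l : ℝ) (hl : Integrable (fun ω => Real.exp (l * X ω)) μ) :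
    (∫ ω, Real.exp (l * A ω) ∂μ) ≤ ∫ ω, Real.exp (l * X ω) ∂μ := by
  
  set S := {ω | v ω = 0} with hSdef
  have hSm : MeasurableSet S := hv (measurableSet_singleton 0)
  have hP : μ S ≠ 0 := h0.ne'
  have hPfin : μ S ≠ ⊤ := measure_ne_top μ S
  have hPpos : 0 < (μ S).toReal := ENNReal.toReal_pos hP hPfin
  set m : ℝ := (∫ ω' in S, X ω' ∂μ) / (μ S).toReal with hm
  -- Jensen on S
  haveI : NeZero (μ.restrict S) := ⟨by
    simpa [Measure.restrict_eq_zero] using hP⟩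
  have hjen : Real.exp (l * m) ≤ ⨍ ω in S, Real.exp (l * X ω) ∂μ := by
    have h := convexOn_exp.map_average_le Real.continuous_exp.continuousOn isClosed_univ
      (Filter.Eventually.of_forall fun ω => Set.mem_univ _)
      ((hX.restrict).const_mul l) (hl.restrict (s := S))
    have havg : ⨍ ω in S, l * X ω ∂μ = l * m := by
      rw [setAverage_eq, integral_const_mul, smul_eq_mul, hm, measureReal_def]
      field_simp
    rwa [havg] at h
  have hIS : ∫ ω in S, Real.exp (l * m) ∂μ ≤ ∫ ω in S, Real.exp (l * X ω) ∂μ := by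
    rw [setIntegral_const, smul_eq_mul]
    have := mul_le_mul_of_nonneg_left hjen hPpos.le
    rwa [setAverage_eq, smul_eq_mul, ← mul_assoc, measureReal_def, mul_inv_cancel₀ hPpos.ne', one_mul] at this
  -- pointwise identification of exp(l*A)
  have hpt : ∀ ω, Real.exp (l * A ω) =
      S.indicator (fun _ => Real.exp (l * m)) ω + Sᶜ.indicator (fun ω => Real.exp (l * X ω)) ω := by
    intro ω
    rcases hv01 ω with h | h
    · have hωS : ω ∈ S := h
      simp [hA, Set.indicator_of_mem hωS, Set.indicator_of_notMem (by simp [hωS] : ω ∉ Sᶜ), h, hm]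
    · have hωS : ω ∉ S := by simp [hSdef, h]
      simp [hA, Set.indicator_of_notMem hωS, Set.indicator_of_mem (Set.mem_compl hωS), h]
  calc ∫ ω, Real.exp (l * A ω) ∂μ
      = ∫ ω, (S.indicator (fun _ => Real.exp (l * m)) ω
          + Sᶜ.indicator (fun ω => Real.exp (l * X ω)) ω) ∂μ := by
        exact integral_congr_ae (Filter.Eventually.of_forall hpt)
    _ = (∫ ω in S, Real.exp (l * m) ∂μ) + ∫ ω in Sᶜ, Real.exp (l * X ω) ∂μ := by
        rw [integral_add, integral_indicator hSm, integral_indicator hSm.compl]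
        · exact (integrable_const _).indicator hSm
        · exact (integrable_indicator_iff hSm.compl).2 (hl.restrict (s := Sᶜ))
    _ ≤ (∫ ω in S, Real.exp (l * X ω) ∂μ) + ∫ ω in Sᶜ, Real.exp (l * X ω) ∂μ := by
        gcongr
    _ = ∫ ω, Real.exp (l * X ω) ∂μ := by
        rw [← integral_add_compl hSm hl]
end
end

section
/- Let c ≥ 0, C ∈ [0,1], and let g : [0,1] → [0,1] be measurable, symmetric in the sense g(y) = g(1 − y) for all y, with ∫₀¹ g(y) dy = C. Then ∫₀¹ g(y) e^{c·Φ⁻¹(y)} dy = 2 ∫₀^{1/2} g(y) cosh(c·Φ⁻¹(y)) dy, and since y ↦ cosh(c·Φ⁻¹(y)) is monotone decreasing on (0, 1/2], ∫₀¹ g(y) e^{c·Φ⁻¹(y)} dy ≥ ∫_{(1−C)/2}^{(1+C)/2} e^{c·Φ⁻¹(y)} dy = e^{c²/2}·(Φ(Φ⁻¹((1 + C)/2) − c) − Φ(Φ⁻¹((1 − C)/2) − c)), with equality when g is the indicator function of [(1−C)/2, (1+C)/2]. -/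
open MeasureTheory ProbabilityTheory Real

noncomputable section

section
set_option maxHeartbeats 1000000
namespace SWIMaux
open Set
open scoped NNReal ENNReal

local notation "μ₀" => gaussianReal (0:ℝ) (1:ℝ≥0)
local notation "φ" => gaussianPDFReal 0 1

lemma hv1 : (1:ℝ≥0) ≠ 0 := one_ne_zero

lemma phi_int : Integrable φ := integrable_gaussianPDFReal 0 1

lemma phi_pos (x : ℝ) : 0 < φ x := gaussianPDFReal_pos 0 1 x hv1

lemma phi_meas : Measurable φ := measurable_gaussianPDFReal 0 1

lemma Phi_eq_integral (x : ℝ) : Phi x = ∫ t in Iic x, φ t := by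
  rw [Phi, gaussianReal_apply_eq_integral 0 hv1 (Iic x)]
  exact ENNReal.toReal_ofReal (setIntegral_nonneg measurableSet_Iic
    fun t _ => gaussianPDFReal_nonneg 0 1 t)

lemma Phi_nonneg (x : ℝ) : 0 ≤ Phi x := ENNReal.toReal_nonneg

lemma Phi_le_one (x : ℝ) : Phi x ≤ 1 := by
  rw [Phi]
  have h : μ₀ (Iic x) ≤ 1 := prob_le_one
  calc ((μ₀) (Iic x)).toReal ≤ (1 : ℝ≥0∞).toReal :=
        ENNReal.toReal_mono (by simp) h
    _ = 1 := by simp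

lemma Phi_sub_Phi {a b : ℝ} : Phi b - Phi a = ∫ t in a..b, φ t := by
  rw [Phi_eq_integral, Phi_eq_integral]
  exact intervalIntegral.integral_Iic_sub_Iic (μ := volume) phi_int.integrableOn phi_int.integrableOn

lemma Phi_strictMono : StrictMono Phi := by
  intro a b hab
  have h : 0 < ∫ t in a..b, φ t :=
    intervalIntegral.intervalIntegral_pos_of_pos phi_int.intervalIntegrable phi_pos hab
  linarith [Phi_sub_Phi (a := a) (b := b)]

lemma Phi_pos (x : ℝ) : 0 < Phi x :=
  lt_of_le_of_lt (Phi_nonneg (x - 1)) (Phi_strictMono (by linarith))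

lemma Phi_lt_one (x : ℝ) : Phi x < 1 :=
  lt_of_lt_of_le (Phi_strictMono (show x < x + 1 by linarith)) (Phi_le_one (x + 1))

lemma Phi_continuous : Continuous Phi := by
  have h : Continuous fun x => ∫ t in (0:ℝ)..x, φ t :=
    intervalIntegral.continuous_primitive (fun a b => phi_int.intervalIntegrable) 0
  have : Phi = fun x => Phi 0 + ∫ t in (0:ℝ)..x, φ t := by
    funext x
    rw [← Phi_sub_Phi]; ring
  rw [this]
  exact continuous_const.add h

lemma Phi_eq_cdf (x : ℝ) : Phi x = cdf μ₀ x := (cdf_eq_real _ x).symm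

lemma Phi_tendsto_atTop : Filter.Tendsto Phi Filter.atTop (nhds 1) := by
  have := tendsto_cdf_atTop (μ := μ₀)
  refine this.congr fun x => (Phi_eq_cdf x).symm

lemma Phi_tendsto_atBot : Filter.Tendsto Phi Filter.atBot (nhds 0) := by
  have := tendsto_cdf_atBot (μ := μ₀)
  refine this.congr fun x => (Phi_eq_cdf x).symm

lemma Phi_surj {y : ℝ} (hy : y ∈ Ioo (0:ℝ) 1) : ∃ x, Phi x = y := by
  obtain ⟨a, ha⟩ : ∃ a, Phi a < y := by
    have := (Phi_tendsto_atBot.eventually_lt_const hy.1).exists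
    simpa using this
  obtain ⟨b, hb⟩ : ∃ b, y < Phi b := by
    have := (Phi_tendsto_atTop.eventually_const_lt hy.2).exists
    simpa using this
  have hab : a ≤ b := by
    by_contra h
    exact absurd (Phi_strictMono.monotone (le_of_not_ge h)) (by linarith)
  obtain ⟨x, _, hx⟩ := intermediate_value_Icc hab Phi_continuous.continuousOn
    (mem_Icc.2 ⟨le_of_lt ha, le_of_lt hb⟩)
  exact ⟨x, hx⟩

lemma range_Phi : Set.range Phi = Ioo 0 1 := by
  ext y
  constructor
  · rintro ⟨x, rfl⟩; exact ⟨Phi_pos x, Phi_lt_one x⟩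
  · exact Phi_surj

lemma Phi_PhiInv {y : ℝ} (hy : y ∈ Ioo (0:ℝ) 1) : Phi (PhiInv y) = y :=
  Function.invFun_eq (Phi_surj hy)

lemma PhiInv_Phi (x : ℝ) : PhiInv (Phi x) = x :=
  Function.leftInverse_invFun Phi_strictMono.injective x

lemma PhiInv_le_iff {y x : ℝ} (hy : y ∈ Ioo (0:ℝ) 1) : PhiInv y ≤ x ↔ y ≤ Phi x := by
  conv_rhs => rw [← Phi_PhiInv hy]
  exact Phi_strictMono.le_iff_le.symm

lemma lt_PhiInv_iff {y x : ℝ} (hy : y ∈ Ioo (0:ℝ) 1) : x < PhiInv y ↔ Phi x < y := by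
  rw [← not_le, ← not_le, PhiInv_le_iff hy]

lemma PhiInv_lt_iff {y x : ℝ} (hy : y ∈ Ioo (0:ℝ) 1) : PhiInv y < x ↔ y < Phi x := by
  conv_rhs => rw [← Phi_PhiInv hy]
  exact Phi_strictMono.lt_iff_lt.symm

lemma PhiInv_mono {y z : ℝ} (hy : y ∈ Ioo (0:ℝ) 1) (hz : z ∈ Ioo (0:ℝ) 1) (h : y ≤ z) :
    PhiInv y ≤ PhiInv z := by
  rw [PhiInv_le_iff hy, Phi_PhiInv hz]; exact h

lemma phi_even (t : ℝ) : φ (-t) = φ t := by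
  simp [gaussianPDFReal, neg_sq]

lemma Phi_neg (x : ℝ) : Phi (-x) = 1 - Phi x := by
  have h1 : Phi (-x) = ∫ t in Ioi x, φ t := by
    rw [Phi_eq_integral, ← integral_comp_neg_Ioi]
    exact setIntegral_congr_fun measurableSet_Ioi fun t _ => phi_even t
  have h2 : (∫ t in Iic x, φ t) + ∫ t in Ioi x, φ t = 1 := by
    rw [← integral_gaussianPDFReal_eq_one 0 hv1]
    exact intervalIntegral.integral_Iic_add_Ioi phi_int.integrableOn phi_int.integrableOn
  rw [h1, ← Phi_eq_integral] at *
  linarith [h2, Phi_eq_integral x]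


lemma Phi_zero : Phi 0 = 1/2 := by
  have := Phi_neg 0
  rw [neg_zero] at this
  linarith

lemma one_sub_mem {y : ℝ} (hy : y ∈ Ioo (0:ℝ) 1) : 1 - y ∈ Ioo (0:ℝ) 1 :=
  ⟨by linarith [hy.2], by linarith [hy.1]⟩

lemma PhiInv_one_sub {y : ℝ} (hy : y ∈ Ioo (0:ℝ) 1) : PhiInv (1 - y) = -PhiInv y := by
  have h : Phi (-PhiInv y) = 1 - y := by rw [Phi_neg, Phi_PhiInv hy]
  rw [← h, PhiInv_Phi]

lemma PhiInv_half : PhiInv (1/2) = 0 := by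
  rw [← Phi_zero, PhiInv_Phi]

lemma PhiInv_nonpos {y : ℝ} (hy : y ∈ Ioo (0:ℝ) 1) (h : y ≤ 1/2) : PhiInv y ≤ 0 := by
  rw [← PhiInv_half]
  exact PhiInv_mono hy (by norm_num) h

lemma PhiInv_junk {y : ℝ} (hy : y ∉ Ioo (0:ℝ) 1) : PhiInv y = PhiInv 2 := by
  have h1 : ¬ ∃ x, Phi x = y := by
    rw [show (∃ x, Phi x = y) ↔ y ∈ Set.range Phi from Iff.rfl, range_Phi]
    exact hy
  have h2 : ¬ ∃ x, Phi x = (2:ℝ) := by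
    rw [show (∃ x, Phi x = (2:ℝ)) ↔ (2:ℝ) ∈ Set.range Phi from Iff.rfl, range_Phi]
    norm_num
  rw [PhiInv, Function.invFun_neg h1, Function.invFun_neg h2]

lemma measurable_PhiInv : Measurable PhiInv := by
  apply measurable_of_Iic
  intro a
  have hset : PhiInv ⁻¹' Iic a =
      (Ioo 0 1 ∩ Iic (Phi a)) ∪ (if PhiInv 2 ≤ a then (Ioo (0:ℝ) 1)ᶜ else ∅) := by
    ext y
    by_cases hy : y ∈ Ioo (0:ℝ) 1
    · simp only [mem_preimage, mem_Iic, mem_union, mem_inter_iff, hy, true_and]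
      rw [PhiInv_le_iff hy]
      constructor
      · exact fun h => Or.inl h
      · rintro (h | h)
        · exact h
        · split_ifs at h
          · exact absurd hy h
          · exact absurd h (notMem_empty y)
    · simp only [mem_preimage, mem_Iic, mem_union, mem_inter_iff, hy, false_and, false_or]
      rw [PhiInv_junk hy]
      split_ifs with h
      · simp [hy, h]
      · simp [h]
  rw [hset]
  refine (measurableSet_Ioo.inter measurableSet_Iic).union ?_
  split_ifs
  · exact measurableSet_Ioo.compl
  · exact MeasurableSet.empty

lemma ofReal_Phi (x : ℝ) : ENNReal.ofReal (Phi x) = μ₀ (Iic x) := by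
  rw [Phi, ENNReal.ofReal_toReal (measure_ne_top _ _)]

lemma map_PhiInv : Measure.map PhiInv (volume.restrict (Ioo 0 1)) = μ₀ := by
  have : IsFiniteMeasure ((volume : Measure ℝ).restrict (Ioo 0 1)) :=
    ⟨by rw [Measure.restrict_apply_univ]; simp⟩
  have : IsFiniteMeasure (Measure.map PhiInv ((volume : Measure ℝ).restrict (Ioo 0 1))) :=
    Measure.isFiniteMeasure_map _ _
  refine Measure.ext_of_Iic _ _ fun x => ?_
  rw [Measure.map_apply measurable_PhiInv measurableSet_Iic,
    Measure.restrict_apply (measurable_PhiInv measurableSet_Iic)]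
  have hset : PhiInv ⁻¹' Iic x ∩ Ioo 0 1 = Ioc 0 (Phi x) := by
    ext y
    simp only [mem_inter_iff, mem_preimage, mem_Iic, mem_Ioc, mem_Ioo]
    constructor
    · rintro ⟨h1, h2⟩
      exact ⟨h2.1, (PhiInv_le_iff h2).mp h1⟩
    · rintro ⟨h0, hle⟩
      have hy : y ∈ Ioo (0:ℝ) 1 := ⟨h0, lt_of_le_of_lt hle (Phi_lt_one x)⟩
      exact ⟨(PhiInv_le_iff hy).mpr hle, hy⟩
  rw [hset, Real.volume_Ioc, ← ofReal_Phi]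
  norm_num

lemma integral_transfer {f : ℝ → ℝ} (hf : AEStronglyMeasurable f μ₀) :
    ∫ y in Ioo (0:ℝ) 1, f (PhiInv y) = ∫ x, f x ∂μ₀ := by
  rw [← map_PhiInv] at hf ⊢
  exact (integral_map measurable_PhiInv.aemeasurable hf).symm

lemma integrable_transfer {f : ℝ → ℝ} (hf : Integrable f μ₀) :
    IntegrableOn (fun y => f (PhiInv y)) (Ioo 0 1) := by
  rw [← map_PhiInv] at hf
  exact (integrable_map_measure hf.aestronglyMeasurable
    measurable_PhiInv.aemeasurable).mp hf

lemma mu0_withDensity : μ₀ = volume.withDensity (fun x => ((φ x).toNNReal : ℝ≥0∞)) := by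
  rw [gaussianReal_of_var_ne_zero 0 hv1]
  rfl

lemma phi_toNNReal_meas : Measurable (fun x => (φ x).toNNReal) :=
  measurable_real_toNNReal.comp phi_meas

lemma smul_php (f : ℝ → ℝ) (x : ℝ) : (φ x).toNNReal • f x = φ x * f x := by
  rw [NNReal.smul_def, Real.coe_toNNReal _ (gaussianPDFReal_nonneg 0 1 x), smul_eq_mul]

lemma integral_mu0 (f : ℝ → ℝ) : ∫ x, f x ∂μ₀ = ∫ x, φ x * f x := by
  rw [mu0_withDensity, integral_withDensity_eq_integral_smul phi_toNNReal_meas f]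
  exact integral_congr_ae (ae_of_all _ fun x => smul_php f x)

lemma setIntegral_mu0 (f : ℝ → ℝ) {s : Set ℝ} (hs : MeasurableSet s) :
    ∫ x in s, f x ∂μ₀ = ∫ x in s, φ x * f x := by
  rw [mu0_withDensity, restrict_withDensity hs,
    integral_withDensity_eq_integral_smul phi_toNNReal_meas f]
  exact integral_congr_ae (ae_of_all _ fun x => smul_php f x)

lemma integrable_mu0_iff {f : ℝ → ℝ} (hf : AEStronglyMeasurable f μ₀) :
    Integrable f μ₀ ↔ Integrable (fun x => φ x * f x) := by
  rw [mu0_withDensity, integrable_withDensity_iff_integrable_smul phi_toNNReal_meas]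
  constructor <;> intro h
  · exact h.congr (ae_of_all _ fun x => smul_php f x)
  · exact h.congr (ae_of_all _ fun x => (smul_php f x).symm)

lemma phi_mul_exp (c x : ℝ) : φ x * exp (c * x) = exp (c^2/2) * φ (x - c) := by
  simp only [gaussianPDFReal, NNReal.coe_one, mul_one, sub_zero]
  have h : exp (-x^2/2) * exp (c*x) = exp (c^2/2) * exp (-(x-c)^2/2) := by
    rw [← exp_add, ← exp_add]
    congr 1
    ring
  linear_combination ((Real.sqrt (2*π))⁻¹) * h

lemma integrable_exp_phi (c : ℝ) : Integrable (fun x => φ x * exp (c * x)) := by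
  have h : (fun x => φ x * exp (c*x)) = fun x => exp (c^2/2) * φ (x - c) := by
    funext x
    exact phi_mul_exp c x
  rw [h]
  exact (phi_int.comp_sub_right c).const_mul _

lemma integrable_exp_mu0 (c : ℝ) : Integrable (fun x => exp (c * x)) μ₀ := by
  rw [integrable_mu0_iff (Continuous.aestronglyMeasurable (by continuity))]
  exact integrable_exp_phi c

lemma integral_exp_mu0 (c : ℝ) : ∫ x, exp (c * x) ∂μ₀ = exp (c^2/2) := by
  rw [integral_mu0]
  simp_rw [phi_mul_exp]
  rw [integral_const_mul, integral_sub_right_eq_self (fun x => φ x) c,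
    integral_gaussianPDFReal_eq_one 0 hv1, mul_one]

lemma setIntegral_exp_mu0 {A B : ℝ} (c : ℝ) (hAB : A ≤ B) :
    ∫ x in Ioc A B, exp (c * x) ∂μ₀ = exp (c^2/2) * (Phi (B - c) - Phi (A - c)) := by
  rw [setIntegral_mu0 _ measurableSet_Ioc, ← intervalIntegral.integral_of_le hAB]
  calc ∫ x in A..B, φ x * exp (c*x)
      = ∫ x in A..B, exp (c^2/2) * φ (x - c) := by
        apply intervalIntegral.integral_congr
        intro x _
        exact phi_mul_exp c x
    _ = exp (c^2/2) * ∫ x in A..B, φ (x - c) := intervalIntegral.integral_const_mul _ _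
    _ = exp (c^2/2) * ∫ x in (A-c)..(B-c), φ x := by
        rw [intervalIntegral.integral_comp_sub_right]
    _ = _ := by rw [← Phi_sub_Phi]


/-! ### Integrability on `(0,1)` -/

lemma meas_E (c : ℝ) : Measurable (fun y => exp (c * PhiInv y)) :=
  (measurable_const.mul measurable_PhiInv).exp

lemma int_E (c : ℝ) : IntegrableOn (fun y => exp (c * PhiInv y)) (Ioo 0 1) :=
  integrable_transfer (f := fun x => exp (c * x)) (integrable_exp_mu0 c)

lemma cosh_expand (t : ℝ) : cosh t = (exp t + exp (-t)) / 2 := Real.cosh_eq t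

lemma meas_cosh (c : ℝ) : Measurable (fun y => cosh (c * PhiInv y)) :=
  Real.continuous_cosh.measurable.comp (measurable_const.mul measurable_PhiInv)

lemma int_cosh (c : ℝ) : IntegrableOn (fun y => cosh (c * PhiInv y)) (Ioo 0 1) := by
  have h : (fun y => cosh (c * PhiInv y)) =
      fun y => (exp (c * PhiInv y) + exp ((-c) * PhiInv y)) / 2 := by
    funext y
    rw [cosh_expand, neg_mul]
  rw [h]
  exact ((int_E c).add (int_E (-c))).div_const 2

lemma int_bdd_mul {G F : ℝ → ℝ} (hG : Measurable G)
    (hG01 : ∀ y ∈ Icc (0:ℝ) 1, G y ∈ Icc (0:ℝ) 1) (hF : Measurable F)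
    {s : Set ℝ} (hs : MeasurableSet s) (hsub : s ⊆ Ioo 0 1)
    (hFint : IntegrableOn F s) : IntegrableOn (fun y => G y * F y) s := by
  refine Integrable.mono hFint ((hG.mul hF).aestronglyMeasurable).restrict ?_
  rw [ae_restrict_iff' hs]
  refine ae_of_all _ fun y hy => ?_
  have hmem : G y ∈ Icc (0:ℝ) 1 := hG01 y (Ioo_subset_Icc_self (hsub hy))
  rw [norm_mul, Real.norm_eq_abs, Real.norm_eq_abs, abs_of_nonneg hmem.1]
  nlinarith [abs_nonneg (F y), hmem.2, le_abs_self (F y), neg_abs_le (F y)]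

/-! ### Symmetric splitting -/

lemma ii_of_Ioo {F : ℝ → ℝ} {a b : ℝ} (hab : a ≤ b)
    (hm : AEStronglyMeasurable F (volume.restrict (Ioo a b)))
    (h : IntegrableOn F (Ioo a b)) : IntervalIntegrable F volume a b := by
  rw [intervalIntegrable_iff_integrableOn_Ioo_of_le hab]
  exact h

lemma ii_eq_Ioo {F : ℝ → ℝ} {a b : ℝ} (hab : a ≤ b) :
    (∫ y in a..b, F y) = ∫ y in Ioo a b, F y := by
  rw [intervalIntegral.integral_of_le hab]
  exact setIntegral_congr_set Ioo_ae_eq_Ioc.symm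

lemma split_sym (c : ℝ) (G : ℝ → ℝ) (hG : Measurable G) {t : ℝ} (ht0 : 0 ≤ t) (ht : t ≤ 1/2)
    (hsymG : ∀ y ∈ Ioo (0:ℝ) 1, G (1 - y) = G y)
    (hi1 : IntegrableOn (fun y => G y * exp (c * PhiInv y)) (Ioo t (1/2)))
    (hi2 : IntegrableOn (fun y => G y * exp (-(c * PhiInv y))) (Ioo t (1/2)))
    (hi3 : IntegrableOn (fun y => G y * exp (c * PhiInv y)) (Ioo (1/2) (1-t))) :
    (∫ y in t..(1-t), G y * exp (c * PhiInv y)) =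
      2 * ∫ y in t..(1/2), G y * cosh (c * PhiInv y) := by
  have ht2 : (1/2 : ℝ) ≤ 1 - t := by linarith
  have hmeas1 : Measurable (fun y => G y * exp (c * PhiInv y)) := hG.mul (meas_E c)
  have hmeas2 : Measurable (fun y => G y * exp (-(c * PhiInv y))) :=
    hG.mul ((measurable_const.mul measurable_PhiInv).neg.exp)
  have hII1 : IntervalIntegrable (fun y => G y * exp (c * PhiInv y)) volume t (1/2) :=
    ii_of_Ioo ht hmeas1.aestronglyMeasurable.restrict hi1
  have hII2 : IntervalIntegrable (fun y => G y * exp (-(c * PhiInv y))) volume t (1/2) :=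
    ii_of_Ioo ht hmeas2.aestronglyMeasurable.restrict hi2
  have hII3 : IntervalIntegrable (fun y => G y * exp (c * PhiInv y)) volume (1/2) (1-t) :=
    ii_of_Ioo ht2 hmeas1.aestronglyMeasurable.restrict hi3
  have hsplit : (∫ y in t..(1-t), G y * exp (c * PhiInv y)) =
      (∫ y in t..(1/2), G y * exp (c * PhiInv y)) +
        ∫ y in (1/2:ℝ)..(1-t), G y * exp (c * PhiInv y) :=
    (intervalIntegral.integral_add_adjacent_intervals hII1 hII3).symm
  have hrefl : (∫ y in (1/2:ℝ)..(1-t), G y * exp (c * PhiInv y)) =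
      ∫ y in t..(1/2), G y * exp (-(c * PhiInv y)) := by
    have h1 := intervalIntegral.integral_comp_sub_left
      (a := t) (b := 1/2) (fun y => G y * exp (c * PhiInv y)) 1
    norm_num at h1
    rw [← h1]
    rw [ii_eq_Ioo ht, ii_eq_Ioo ht]
    apply setIntegral_congr_fun measurableSet_Ioo
    intro y hy
    have hy01 : y ∈ Ioo (0:ℝ) 1 := ⟨lt_of_le_of_lt ht0 hy.1, by linarith [hy.2]⟩
    simp only
    rw [hsymG y hy01, PhiInv_one_sub hy01]
    ring_nf
  have hsum : (∫ y in t..(1/2), G y * exp (c * PhiInv y)) +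
      (∫ y in t..(1/2), G y * exp (-(c * PhiInv y))) =
      2 * ∫ y in t..(1/2), G y * cosh (c * PhiInv y) := by
    rw [← intervalIntegral.integral_add hII1 hII2,
      ← intervalIntegral.integral_const_mul]
    apply intervalIntegral.integral_congr
    intro y _
    simp only [cosh_expand]
    ring
  rw [hsplit, hrefl, hsum]

lemma antitone_cosh {c : ℝ} (hc : 0 ≤ c) :
    AntitoneOn (fun y => cosh (c * PhiInv y)) (Ioc (0:ℝ) (1/2)) := by
  intro y1 h1 y2 h2 h12
  have hy1 : y1 ∈ Ioo (0:ℝ) 1 := ⟨h1.1, by linarith [h1.2]⟩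
  have hy2 : y2 ∈ Ioo (0:ℝ) 1 := ⟨h2.1, by linarith [h2.2]⟩
  have hp1 : PhiInv y1 ≤ 0 := PhiInv_nonpos hy1 h1.2
  have hp2 : PhiInv y2 ≤ 0 := PhiInv_nonpos hy2 h2.2
  have hle : PhiInv y1 ≤ PhiInv y2 := PhiInv_mono hy1 hy2 h12
  simp only
  rw [Real.cosh_le_cosh, abs_mul, abs_mul, abs_of_nonneg hc, abs_of_nonpos hp1, abs_of_nonpos hp2]
  exact mul_le_mul_of_nonneg_left (by linarith) hc

lemma int_g {g : ℝ → ℝ} (hg : Measurable g)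
    (hg01 : ∀ y ∈ Icc (0:ℝ) 1, g y ∈ Icc (0:ℝ) 1)
    {s : Set ℝ} (hs : MeasurableSet s) (hsub : s ⊆ Ioo 0 1) : IntegrableOn g s := by
  refine Measure.integrableOn_of_bounded (s := s) (M := 1) ?_ hg.aestronglyMeasurable ?_
  · exact ne_top_of_le_ne_top (by simp) (measure_mono hsub)
  · rw [ae_restrict_iff' hs]
    refine ae_of_all _ fun y hy => ?_
    have h := hg01 y (Ioo_subset_Icc_self (hsub hy))
    rw [Real.norm_eq_abs, abs_of_nonneg h.1]
    exact h.2

lemma g_half {g : ℝ → ℝ} (hg : Measurable g) (hg01 : ∀ y ∈ Icc (0:ℝ) 1, g y ∈ Icc (0:ℝ) 1)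
    (hsym : ∀ y ∈ Icc (0:ℝ) 1, g (1 - y) = g y) {C : ℝ}
    (hint : (∫ y in (0:ℝ)..1, g y) = C) : (∫ y in (0:ℝ)..(1/2), g y) = C/2 := by
  have hII1 : IntervalIntegrable g volume 0 (1/2) :=
    ii_of_Ioo (by norm_num) hg.aestronglyMeasurable.restrict
      (int_g hg hg01 measurableSet_Ioo (fun x hx => ⟨hx.1, by linarith [hx.2]⟩))
  have hII2 : IntervalIntegrable g volume (1/2) 1 :=
    ii_of_Ioo (by norm_num) hg.aestronglyMeasurable.restrict
      (int_g hg hg01 measurableSet_Ioo (fun x hx => ⟨by linarith [hx.1], hx.2⟩))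
  have hs : (∫ y in (0:ℝ)..1, g y) =
      (∫ y in (0:ℝ)..(1/2), g y) + ∫ y in (1/2:ℝ)..1, g y :=
    (intervalIntegral.integral_add_adjacent_intervals hII1 hII2).symm
  have hrefl : (∫ y in (1/2:ℝ)..1, g y) = ∫ y in (0:ℝ)..(1/2), g y := by
    have h1 := intervalIntegral.integral_comp_sub_left (a := (0:ℝ)) (b := 1/2) g 1
    simp only [show (1:ℝ) - 1/2 = 1/2 by norm_num, sub_zero] at h1
    rw [← h1, ii_eq_Ioo (by norm_num), ii_eq_Ioo (by norm_num)]
    apply setIntegral_congr_fun measurableSet_Ioo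
    intro y hy
    exact hsym y ⟨le_of_lt hy.1, by linarith [hy.2]⟩
  rw [hs, hrefl] at hint
  linarith

lemma bathtub {c C : ℝ} (hc : 0 ≤ c) (hC0 : 0 ≤ C) (hC1 : C ≤ 1)
    {g : ℝ → ℝ} (hg : Measurable g) (hg01 : ∀ y ∈ Icc (0:ℝ) 1, g y ∈ Icc (0:ℝ) 1)
    (hhalf : (∫ y in (0:ℝ)..(1/2), g y) = C/2) :
    (∫ y in Ioc ((1-C)/2) (1/2), cosh (c * PhiInv y)) ≤
      ∫ y in Ioc (0:ℝ) (1/2), g y * cosh (c * PhiInv y) := by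
  set h : ℝ → ℝ := fun y => cosh (c * PhiInv y) with hh
  set t : ℝ := (1-C)/2 with htdef
  have ht0 : 0 ≤ t := by rw [htdef]; linarith
  have htle : t ≤ 1/2 := by rw [htdef]; linarith
  have hsub0 : Ioc (0:ℝ) (1/2) ⊆ Ioo 0 1 := fun x hx => ⟨hx.1, by linarith [hx.2]⟩
  have hint_h : IntegrableOn h (Ioc (0:ℝ) (1/2)) := (int_cosh c).mono_set hsub0
  have hint_gh : IntegrableOn (fun y => g y * h y) (Ioc (0:ℝ) (1/2)) :=
    int_bdd_mul hg hg01 (meas_cosh c) measurableSet_Ioc hsub0 hint_h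
  have hghalf : (∫ y in Ioc (0:ℝ) (1/2), g y) = C/2 := by
    rw [← hhalf, intervalIntegral.integral_of_le (by norm_num)]
  rcases eq_or_lt_of_le hC1 with hC | hC
  · -- C = 1, t = 0
    have ht : t = 0 := by rw [htdef, ← hC]; ring
    rw [ht]
    have hint1g : IntegrableOn (fun y => 1 - g y) (Ioc (0:ℝ) (1/2)) :=
      (integrable_const 1).sub (int_g hg hg01 measurableSet_Ioc hsub0)
    have hzero : (∫ y in Ioc (0:ℝ) (1/2), (1 - g y)) = 0 := by
      rw [integral_sub (integrable_const 1) (int_g hg hg01 measurableSet_Ioc hsub0)]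
      have h1 : (∫ y in Ioc (0:ℝ) (1/2), (1:ℝ)) = 1/2 := by
        rw [setIntegral_const, measureReal_def, Real.volume_Ioc]
        norm_num
      rw [h1, hghalf, hC]
      norm_num
    have hnn : (0 : ℝ → ℝ) ≤ᵐ[volume.restrict (Ioc (0:ℝ) (1/2))] (fun y => 1 - g y) := by
      rw [Filter.EventuallyLE, ae_restrict_iff' measurableSet_Ioc]
      refine ae_of_all _ fun y hy => ?_
      have := hg01 y (Ioo_subset_Icc_self (hsub0 hy))
      simp only [Pi.zero_apply]
      linarith [this.2]
    have hae : (fun y => 1 - g y) =ᵐ[volume.restrict (Ioc (0:ℝ) (1/2))] 0 :=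
      (setIntegral_eq_zero_iff_of_nonneg_ae hnn hint1g).mp hzero
    refine le_of_eq ?_
    refine integral_congr_ae ?_
    filter_upwards [hae] with y hy
    have : g y = 1 := by
      simp only [Pi.zero_apply] at hy
      linarith
    rw [this, one_mul]
  · -- C < 1, so t > 0
    have ht0' : 0 < t := by rw [htdef]; linarith
    have htmem : t ∈ Ioc (0:ℝ) (1/2) := ⟨ht0', htle⟩
    set K : ℝ := h t with hK
    have hsub1 : Ioc (0:ℝ) t ⊆ Ioo 0 1 := fun x hx => ⟨hx.1, by linarith [hx.2, htle]⟩
    have hsub2 : Ioc t (1/2 : ℝ) ⊆ Ioo 0 1 := fun x hx =>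
      ⟨lt_of_le_of_lt ht0 hx.1, by linarith [hx.2]⟩
    have hint_g1 : IntegrableOn g (Ioc (0:ℝ) t) := int_g hg hg01 measurableSet_Ioc hsub1
    have hint_g2 : IntegrableOn g (Ioc t (1/2:ℝ)) := int_g hg hg01 measurableSet_Ioc hsub2
    have hint_h2 : IntegrableOn h (Ioc t (1/2:ℝ)) := (int_cosh c).mono_set hsub2
    have hint_gh1 : IntegrableOn (fun y => g y * h y) (Ioc (0:ℝ) t) :=
      int_bdd_mul hg hg01 (meas_cosh c) measurableSet_Ioc hsub1 ((int_cosh c).mono_set hsub1)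
    have hint_gh2 : IntegrableOn (fun y => g y * h y) (Ioc t (1/2:ℝ)) :=
      int_bdd_mul hg hg01 (meas_cosh c) measurableSet_Ioc hsub2 hint_h2
    have hint_1mg : IntegrableOn (fun y => 1 - g y) (Ioc t (1/2:ℝ)) :=
      (integrable_const 1).sub hint_g2
    have hint_1mgh : IntegrableOn (fun y => (1 - g y) * h y) (Ioc t (1/2:ℝ)) := by
      have e : (fun y => (1 - g y) * h y) = fun y => h y - g y * h y := by
        funext y; ring
      rw [e]
      exact hint_h2.sub hint_gh2
    -- step 1
    have step1 : K * ∫ y in Ioc (0:ℝ) t, g y ≤ ∫ y in Ioc (0:ℝ) t, g y * h y := by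
      rw [← integral_const_mul]
      refine setIntegral_mono_on (hint_g1.const_mul K) hint_gh1 measurableSet_Ioc
        fun y hy => ?_
      have hymem : y ∈ Ioc (0:ℝ) (1/2) := ⟨hy.1, le_trans hy.2 htle⟩
      have hKy : K ≤ h y := antitone_cosh hc hymem htmem hy.2
      have hgy : 0 ≤ g y := (hg01 y (Ioo_subset_Icc_self (hsub1 hy))).1
      calc K * g y ≤ h y * g y := mul_le_mul_of_nonneg_right hKy hgy
        _ = g y * h y := mul_comm _ _
    -- step 2
    have step2 : (∫ y in Ioc t (1/2:ℝ), (1 - g y) * h y) ≤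
        K * ∫ y in Ioc t (1/2:ℝ), (1 - g y) := by
      rw [← integral_const_mul]
      refine setIntegral_mono_on hint_1mgh (hint_1mg.const_mul K) measurableSet_Ioc
        fun y hy => ?_
      have hymem : y ∈ Ioc (0:ℝ) (1/2) := ⟨lt_of_le_of_lt ht0 hy.1, hy.2⟩
      have hyK : h y ≤ K := antitone_cosh hc htmem hymem (le_of_lt hy.1)
      have hgy : g y ≤ 1 := (hg01 y (Ioo_subset_Icc_self (hsub2 hy))).2
      have : (0:ℝ) ≤ 1 - g y := by linarith
      calc (1 - g y) * h y ≤ (1 - g y) * K := mul_le_mul_of_nonneg_left hyK this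
        _ = K * (1 - g y) := mul_comm _ _
    -- balance
    have hvol2 : (∫ y in Ioc t (1/2:ℝ), (1:ℝ)) = 1/2 - t := by
      rw [setIntegral_const, measureReal_def, Real.volume_Ioc, smul_eq_mul, mul_one,
        ENNReal.toReal_ofReal (by linarith)]
    have hsplitg : (∫ y in Ioc (0:ℝ) t, g y) + (∫ y in Ioc t (1/2:ℝ), g y) = C/2 := by
      rw [← hghalf, ← setIntegral_union (Ioc_disjoint_Ioc_of_le le_rfl) measurableSet_Ioc
        hint_g1 hint_g2, Ioc_union_Ioc_eq_Ioc ht0 htle]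
    have balance : (∫ y in Ioc (0:ℝ) t, g y) = ∫ y in Ioc t (1/2:ℝ), (1 - g y) := by
      rw [integral_sub (integrable_const 1) hint_g2, hvol2]
      have : (1:ℝ)/2 - t = C/2 := by rw [htdef]; ring
      linarith
    -- assemble
    have hfullsplit : (∫ y in Ioc (0:ℝ) (1/2), g y * h y) =
        (∫ y in Ioc (0:ℝ) t, g y * h y) + ∫ y in Ioc t (1/2:ℝ), g y * h y := by
      rw [← setIntegral_union (Ioc_disjoint_Ioc_of_le le_rfl) measurableSet_Ioc hint_gh1 hint_gh2,
        Ioc_union_Ioc_eq_Ioc ht0 htle]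
    have hfinal : (∫ y in Ioc t (1/2:ℝ), (1 - g y) * h y) +
        (∫ y in Ioc t (1/2:ℝ), g y * h y) = ∫ y in Ioc t (1/2:ℝ), h y := by
      rw [← integral_add hint_1mgh hint_gh2]
      refine setIntegral_congr_fun measurableSet_Ioc fun y _ => ?_
      ring
    have chain : (∫ y in Ioc t (1/2:ℝ), h y) ≤ ∫ y in Ioc (0:ℝ) (1/2), g y * h y := by
      rw [hfullsplit, ← hfinal]
      have : K * (∫ y in Ioc t (1/2:ℝ), (1 - g y)) ≤ ∫ y in Ioc (0:ℝ) t, g y * h y := by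
        rw [← balance]; exact step1
      linarith [step2, this]
    exact chain

lemma PhiInv_lt_PhiInv {y z : ℝ} (hy : y ∈ Ioo (0:ℝ) 1) (hz : z ∈ Ioo (0:ℝ) 1) :
    PhiInv y < PhiInv z ↔ y < z := by
  rw [← Phi_strictMono.lt_iff_lt, Phi_PhiInv hy, Phi_PhiInv hz]

lemma mu0_singleton (x : ℝ) : μ₀ {x} = 0 :=
  gaussianReal_absolutelyContinuous 0 hv1 Real.volume_singleton

lemma aes_exp (c : ℝ) : AEStronglyMeasurable (fun x => exp (c * x)) μ₀ :=
  Continuous.aestronglyMeasurable (by continuity)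

lemma integral_E_interval (c : ℝ) {C : ℝ} (hC0 : 0 ≤ C) (hC1 : C ≤ 1) :
    (∫ y in ((1-C)/2)..((1+C)/2), exp (c * PhiInv y)) =
      exp (c^2/2) * (PhiShift c ((1+C)/2) - PhiShift c ((1-C)/2)) := by
  rcases eq_or_lt_of_le hC0 with h0 | h0
  · rw [← h0]
    norm_num [intervalIntegral.integral_same]
  rcases eq_or_lt_of_le hC1 with h1 | h1
  · rw [h1]
    have hL : (∫ y in ((1-1)/2 : ℝ)..((1+1)/2), exp (c * PhiInv y)) = exp (c^2/2) := by
      rw [show ((1-1)/2 : ℝ) = 0 by norm_num, show ((1+1)/2 : ℝ) = 1 by norm_num,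
        ii_eq_Ioo zero_le_one,
        integral_transfer (f := fun x => exp (c * x)) (aes_exp c), integral_exp_mu0]
    rw [hL, show ((1+1)/2 : ℝ) = 1 by norm_num, show ((1-1)/2 : ℝ) = 0 by norm_num]
    rw [PhiShift, PhiShift]
    norm_num
  · set t : ℝ := (1-C)/2 with htdef
    set u : ℝ := (1+C)/2 with hudef
    have htmem : t ∈ Ioo (0:ℝ) 1 := ⟨by rw [htdef]; linarith, by rw [htdef]; linarith⟩
    have humem : u ∈ Ioo (0:ℝ) 1 := ⟨by rw [hudef]; linarith, by rw [hudef]; linarith⟩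
    have htu : t ≤ u := by rw [htdef, hudef]; linarith
    set A : ℝ := PhiInv t with hAdef
    set B : ℝ := PhiInv u with hBdef
    have hAB : A ≤ B := PhiInv_mono htmem humem htu
    have hsub : Ioo t u ⊆ Ioo 0 1 := fun x hx =>
      ⟨lt_trans htmem.1 hx.1, lt_trans hx.2 humem.2⟩
    have hFmeas : Measurable ((Ioo A B).indicator (fun x => exp (c * x))) :=
      Measurable.indicator ((measurable_id.const_mul c).exp) measurableSet_Ioo
    have key : (∫ y in Ioo t u, exp (c * PhiInv y)) =
        ∫ y in Ioo (0:ℝ) 1, ((Ioo A B).indicator (fun x => exp (c * x))) (PhiInv y) := by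
      rw [← inter_eq_self_of_subset_right hsub, ← setIntegral_indicator measurableSet_Ioo]
      refine setIntegral_congr_fun measurableSet_Ioo fun y hy => ?_
      by_cases hm : y ∈ Ioo t u
      · have hm' : PhiInv y ∈ Ioo A B :=
          ⟨(PhiInv_lt_PhiInv htmem hy).mpr hm.1, (PhiInv_lt_PhiInv hy humem).mpr hm.2⟩
        rw [indicator_of_mem hm (fun y => exp (c * PhiInv y)),
          indicator_of_mem hm' (fun x => exp (c * x))]
      · have hm' : PhiInv y ∉ Ioo A B := by
          intro hcon
          exact hm ⟨(PhiInv_lt_PhiInv htmem hy).mp hcon.1, (PhiInv_lt_PhiInv hy humem).mp hcon.2⟩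
        rw [indicator_of_notMem hm (fun y => exp (c * PhiInv y)),
          indicator_of_notMem hm' (fun x => exp (c * x))]
    rw [ii_eq_Ioo htu, key,
      integral_transfer (f := (Ioo A B).indicator (fun x => exp (c * x)))
        hFmeas.aestronglyMeasurable,
      integral_indicator measurableSet_Ioo,
      setIntegral_congr_set (Ioo_ae_eq_Ioc' (mu0_singleton B)),
      setIntegral_exp_mu0 c hAB]
    have hPSu : PhiShift c u = Phi (B - c) := by
      rw [PhiShift, if_neg (not_le.mpr humem.1), if_neg (not_le.mpr humem.2), hBdef]
    have hPSt : PhiShift c t = Phi (A - c) := by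
      rw [PhiShift, if_neg (not_le.mpr htmem.1), if_neg (not_le.mpr htmem.2), hAdef]
    rw [hPSu, hPSt]

lemma conj5_aux (c : ℝ) {C : ℝ} (hC0 : 0 ≤ C) (hC1 : C ≤ 1) {g : ℝ → ℝ}
    (heq : ∀ y ∈ Icc (0:ℝ) 1,
      g y = (Icc ((1-C)/2) ((1+C)/2)).indicator (fun _ => (1:ℝ)) y) :
    (∫ y in (0:ℝ)..1, g y * exp (c * PhiInv y)) =
      ∫ y in ((1-C)/2)..((1+C)/2), exp (c * PhiInv y) := by
  set t : ℝ := (1-C)/2 with htdef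
  set u : ℝ := (1+C)/2 with hudef
  have ht0 : 0 ≤ t := by rw [htdef]; linarith
  have hu1 : u ≤ 1 := by rw [hudef]; linarith
  have htu : t ≤ u := by rw [htdef, hudef]; linarith
  have hsub : Ioo t u ⊆ Ioo 0 1 := fun x hx =>
    ⟨lt_of_le_of_lt ht0 hx.1, lt_of_lt_of_le hx.2 hu1⟩
  have hne : ∀ z : ℝ, ∀ᵐ y : ℝ, y ≠ z := fun z => by
    rw [ae_iff]
    simp only [ne_eq, not_not, Set.setOf_eq_eq_singleton]
    exact Real.volume_singleton
  have hres : ∀ z : ℝ, ∀ᵐ y ∂(volume.restrict (Ioo (0:ℝ) 1)), y ≠ z := fun z =>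
    (hne z).filter_mono (ae_mono Measure.restrict_le_self)
  have hae : ∀ᵐ y ∂(volume.restrict (Ioo (0:ℝ) 1)),
      g y * exp (c * PhiInv y) = (Ioo t u).indicator (fun y => exp (c * PhiInv y)) y := by
    filter_upwards [ae_restrict_mem measurableSet_Ioo, hres t, hres u] with y hy hyt hyu
    have hgy := heq y (Ioo_subset_Icc_self hy)
    by_cases hm : y ∈ Icc t u
    · have hm' : y ∈ Ioo t u := ⟨lt_of_le_of_ne hm.1 (Ne.symm hyt), lt_of_le_of_ne hm.2 hyu⟩
      rw [hgy, indicator_of_mem hm (fun _ => (1:ℝ)),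
        indicator_of_mem hm' (fun y => exp (c * PhiInv y)), one_mul]
    · have hm' : y ∉ Ioo t u := fun hcon => hm (Ioo_subset_Icc_self hcon)
      rw [hgy, indicator_of_notMem hm (fun _ => (1:ℝ)),
        indicator_of_notMem hm' (fun y => exp (c * PhiInv y)), zero_mul]
  rw [ii_eq_Ioo zero_le_one, ii_eq_Ioo htu, integral_congr_ae hae,
    setIntegral_indicator measurableSet_Ioo, inter_eq_self_of_subset_right hsub]
end SWIMaux
end

open SWIMaux

/-- symmetric minimization for dipole smoothing: for symmetric
measurable `g : [0,1] → [0,1]` (`g(y) = g(1-y)`) with `∫₀¹ g = C` and `c ≥ 0`,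
`∫₀¹ g(y) e^{cΦ⁻¹(y)} dy = 2∫₀^{1/2} g(y) cosh(cΦ⁻¹(y)) dy`; `y ↦ cosh(cΦ⁻¹(y))` is
monotone decreasing on `(0, 1/2]`; and
`∫₀¹ g(y) e^{cΦ⁻¹(y)} dy ≥ ∫_{(1-C)/2}^{(1+C)/2} e^{cΦ⁻¹(y)} dy
= e^{c²/2}(Φ(Φ⁻¹((1+C)/2) - c) - Φ(Φ⁻¹((1-C)/2) - c))`, with equality when `g` is the
indicator of `[(1-C)/2, (1+C)/2]`. -/
theorem symmetric_weighted_integral_min (c C : ℝ) (hc : 0 ≤ c)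
    (hC : C ∈ Set.Icc (0 : ℝ) 1)
    (g : ℝ → ℝ) (hg : Measurable g) (hg01 : ∀ y ∈ Set.Icc (0 : ℝ) 1, g y ∈ Set.Icc (0 : ℝ) 1)
    (hsym : ∀ y ∈ Set.Icc (0 : ℝ) 1, g (1 - y) = g y)
    (hint : (∫ y in (0 : ℝ)..1, g y) = C) :
    ((∫ y in (0 : ℝ)..1, g y * Real.exp (c * PhiInv y)) =
      2 * ∫ y in (0 : ℝ)..(1 / 2), g y * Real.cosh (c * PhiInv y)) ∧
    AntitoneOn (fun y => Real.cosh (c * PhiInv y)) (Set.Ioc (0 : ℝ) (1 / 2)) ∧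
    ((∫ y in (0 : ℝ)..1, g y * Real.exp (c * PhiInv y)) ≥
      ∫ y in ((1 - C) / 2)..((1 + C) / 2), Real.exp (c * PhiInv y)) ∧
    ((∫ y in ((1 - C) / 2)..((1 + C) / 2), Real.exp (c * PhiInv y)) =
      Real.exp (c ^ 2 / 2) * (PhiShift c ((1 + C) / 2) - PhiShift c ((1 - C) / 2))) ∧
    ((∀ y ∈ Set.Icc (0 : ℝ) 1,
        g y = Set.indicator (Set.Icc ((1 - C) / 2) ((1 + C) / 2)) (fun _ => (1 : ℝ)) y) →
      (∫ y in (0 : ℝ)..1, g y * Real.exp (c * PhiInv y)) =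
        ∫ y in ((1 - C) / 2)..((1 + C) / 2), Real.exp (c * PhiInv y)) := by
  classical
  obtain ⟨hC0, hC1⟩ := hC
  have hsymG : ∀ y ∈ Set.Ioo (0:ℝ) 1, g (1 - y) = g y := fun y hy =>
    hsym y (Set.Ioo_subset_Icc_self hy)
  have sub1 : Set.Ioo (0:ℝ) (1/2) ⊆ Set.Ioo 0 1 := fun x hx => ⟨hx.1, by linarith [hx.2]⟩
  have sub2 : Set.Ioo (1/2:ℝ) 1 ⊆ Set.Ioo 0 1 := fun x hx => ⟨by linarith [hx.1], hx.2⟩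
  have intE2 : IntegrableOn (fun y => Real.exp (-(c * PhiInv y))) (Set.Ioo (0:ℝ) 1) := by
    simpa [neg_mul] using int_E (-c)
  have hi1 : IntegrableOn (fun y => g y * Real.exp (c * PhiInv y)) (Set.Ioo (0:ℝ) (1/2)) :=
    int_bdd_mul hg hg01 (meas_E c) measurableSet_Ioo sub1 ((int_E c).mono_set sub1)
  have hi2 : IntegrableOn (fun y => g y * Real.exp (-(c * PhiInv y))) (Set.Ioo (0:ℝ) (1/2)) :=
    int_bdd_mul hg hg01 ((measurable_const.mul measurable_PhiInv).neg.exp)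
      measurableSet_Ioo sub1 (intE2.mono_set sub1)
  have hi3 : IntegrableOn (fun y => g y * Real.exp (c * PhiInv y)) (Set.Ioo (1/2:ℝ) 1) :=
    int_bdd_mul hg hg01 (meas_E c) measurableSet_Ioo sub2 ((int_E c).mono_set sub2)
  have e1 : (∫ y in (0:ℝ)..1, g y * Real.exp (c * PhiInv y)) =
      2 * ∫ y in (0:ℝ)..(1/2), g y * Real.cosh (c * PhiInv y) := by
    have hs := split_sym (t := 0) c g hg le_rfl (by norm_num) hsymG
      (by simpa using hi1) (by simpa using hi2) (by simpa using hi3)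
    simpa using hs
  refine ⟨e1, antitone_cosh hc, ?_, integral_E_interval c hC0 hC1,
    fun hind => conj5_aux c hC0 hC1 hind⟩
  set t : ℝ := (1-C)/2 with htdef
  have ht0 : 0 ≤ t := by rw [htdef]; linarith
  have htle : t ≤ 1/2 := by rw [htdef]; linarith
  have subt : Set.Ioo t (1/2:ℝ) ⊆ Set.Ioo 0 1 := fun x hx =>
    ⟨lt_of_le_of_lt ht0 hx.1, by linarith [hx.2]⟩
  have subu : Set.Ioo (1/2:ℝ) (1 - t) ⊆ Set.Ioo 0 1 := fun x hx =>
    ⟨by linarith [hx.1], by linarith [hx.2, ht0]⟩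
  have e2 : (∫ y in ((1-C)/2)..((1+C)/2), Real.exp (c * PhiInv y)) =
      2 * ∫ y in t..(1/2 : ℝ), Real.cosh (c * PhiInv y) := by
    have hu : (1+C)/2 = 1 - t := by rw [htdef]; ring
    rw [hu]
    have hs := split_sym c (fun _ => (1:ℝ)) measurable_const ht0 htle (fun _ _ => rfl)
      (by simpa using (int_E c).mono_set subt)
      (by simpa [neg_mul] using (int_E (-c)).mono_set subt)
      (by simpa using (int_E c).mono_set subu)
    simpa using hs
  have hhalf := g_half hg hg01 hsym hint
  have hbath := bathtub hc hC0 hC1 hg hg01 hhalf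
  rw [ge_iff_le, e1, e2]
  have c1 : (∫ y in t..(1/2:ℝ), Real.cosh (c * PhiInv y)) =
      ∫ y in Set.Ioc t (1/2:ℝ), Real.cosh (c * PhiInv y) :=
    intervalIntegral.integral_of_le htle
  have c2 : (∫ y in (0:ℝ)..(1/2), g y * Real.cosh (c * PhiInv y)) =
      ∫ y in Set.Ioc (0:ℝ) (1/2), g y * Real.cosh (c * PhiInv y) :=
    intervalIntegral.integral_of_le (by norm_num)
  rw [c1, c2]
  linarith [hbath]
end
end
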